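/- Let ρ_{AB} = ∑_k p_k τ_k ⊗ ω_k be a separable state in M_{d_A} ⊗ M_{d_B} with τ_k, ω_k density matrices and {p_k} a probability distribution, and let σ ∈ M_{d_B} be a density matrix with full support. Then D(ρ_{AB} ‖ ρ_A ⊗ σ) ≤ ∑_k p_k D(ω_k ‖ σ), where ρ_A = ∑_k p_k τ_k. -/

import Mathlib

open scoped ComplexOrder
open Kronecker

/-- Matrix logarithm (base 2) of a Hermitian matrix via the functional calculus
(junk value `0` on non-Hermitian matrices). -/
noncomputable def mlog2 {n : Type*} [Fintype n] [DecidableEq n] (A : Matrix n n ℂ) :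
    Matrix n n ℂ :=
  if h : A.IsHermitian then h.cfc (fun x => Real.logb 2 x) else 0

/-- Quantum relative entropy (base 2): `D(ρ‖σ) = Tr(ρ log₂ ρ) − Tr(ρ log₂ σ)`. -/
noncomputable def relEnt {n : Type*} [Fintype n] [DecidableEq n]
    (ρ σ : Matrix n n ℂ) : ℝ :=
  ((ρ * mlog2 ρ).trace).re - ((ρ * mlog2 σ).trace).re

namespace RelEntProof

open Matrix MeasureTheory Set Filter Complex

variable {n : Type*} [Fintype n] [DecidableEq n]

section Scalar

lemma key_quad (x z : ℂ) (d : ℝ) (hd : 0 ≤ d) (h0 : d = 0 → x = 0) :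
    2 * ((starRingEnd ℂ) z * x).re - d * Complex.normSq z ≤ Complex.normSq x / d := by
  rcases hd.eq_or_lt with h | h
  · rw [h0 h.symm]
    simp [← h, Complex.normSq_nonneg, mul_nonneg]
  · have key : Complex.normSq x - 2 * d * ((starRingEnd ℂ) z * x).re + d ^ 2 * Complex.normSq z
        = Complex.normSq (x - (d : ℂ) * z) := by
      simp only [Complex.normSq_apply, Complex.sub_re, Complex.sub_im, Complex.mul_re,
        Complex.mul_im, Complex.ofReal_re, Complex.ofReal_im, Complex.conj_re, Complex.conj_im]
      ring
    have h2 : 0 ≤ Complex.normSq x - 2 * d * ((starRingEnd ℂ) z * x).re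
        + d ^ 2 * Complex.normSq z := key ▸ Complex.normSq_nonneg _
    rw [le_div_iff₀ h]
    nlinarith [h2]

lemma key_quad_eq (x : ℂ) (d : ℝ) :
    2 * ((starRingEnd ℂ) (x / (d : ℂ)) * x).re - d * Complex.normSq (x / (d : ℂ))
      = Complex.normSq x / d := by
  rcases eq_or_ne d 0 with h | h
  · simp [h]
  · have hd : (d : ℂ) ≠ 0 := Complex.ofReal_ne_zero.mpr h
    have e1 : (starRingEnd ℂ) (x / (d : ℂ)) * x = ((Complex.normSq x / d : ℝ) : ℂ) := by
      rw [map_div₀, Complex.conj_ofReal, div_mul_eq_mul_div, ← Complex.normSq_eq_conj_mul_self]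
      push_cast
      ring
    rw [e1, Complex.ofReal_re, Complex.normSq_div, Complex.normSq_ofReal]
    field_simp
    ring

noncomputable def pf (l m s : ℝ) : ℝ := l * (l - m) / ((l + s * m) * (1 + s))

lemma pf_hasDeriv {l m : ℝ} (hl : 0 < l) (hm : 0 < m) {s : ℝ} (hs : s ∈ Ici (0:ℝ)) :
    HasDerivAt (fun u => l * (Real.log (1 + u) - Real.log (l + u * m))) (pf l m s) s := by
  have hs0 : (0:ℝ) ≤ s := hs
  have h1 : (0:ℝ) < 1 + s := by linarith
  have h2 : (0:ℝ) < l + s * m := by nlinarith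
  have d1 : HasDerivAt (fun u : ℝ => Real.log (1 + u)) (1 + s)⁻¹ s := by
    have hi : HasDerivAt (fun u : ℝ => 1 + u) 1 s := (hasDerivAt_id s).const_add 1
    exact (hi.log h1.ne').congr_deriv (by ring)
  have d2 : HasDerivAt (fun u : ℝ => Real.log (l + u * m)) ((l + s * m)⁻¹ * m) s := by
    have hi : HasDerivAt (fun u : ℝ => l + u * m) m s := by
      simpa using ((hasDerivAt_id s).mul_const m).const_add l
    exact (hi.log h2.ne').congr_deriv (by ring)
  have := (d1.sub d2).const_mul l
  refine this.congr_deriv ?_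
  unfold pf
  field_simp
  ring

lemma pf_tendsto {l m : ℝ} (hl : 0 < l) (hm : 0 < m) :
    Tendsto (fun u => l * (Real.log (1 + u) - Real.log (l + u * m))) atTop
      (nhds (-(l * Real.log m))) := by
  have h0 : Tendsto (fun u : ℝ => (l - m) / (1 + u)) atTop (nhds 0) :=
    Tendsto.div_atTop tendsto_const_nhds (tendsto_atTop_add_const_left _ 1 tendsto_id)
  have h1 : Tendsto (fun u : ℝ => m + (l - m) / (1 + u)) atTop (nhds m) := by
    simpa using tendsto_const_nhds.add h0
  have hlog : Tendsto (fun u : ℝ => Real.log (m + (l - m) / (1 + u))) atTop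
      (nhds (Real.log m)) := ((Real.continuousAt_log hm.ne').tendsto).comp h1
  have heq : ∀ᶠ u in atTop, -(l * Real.log (m + (l - m) / (1 + u)))
      = l * (Real.log (1 + u) - Real.log (l + u * m)) := by
    filter_upwards [eventually_ge_atTop (0:ℝ)] with u hu
    have h1u : (0:ℝ) < 1 + u := by linarith
    have h2u : (0:ℝ) < l + u * m := by nlinarith
    have e2 : m + (l - m) / (1 + u) = (l + u * m) / (1 + u) := by
      field_simp
      ring
    rw [e2, Real.log_div h2u.ne' h1u.ne']
    ring
  exact Tendsto.congr' heq (by simpa using (hlog.const_mul l).neg)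

lemma pf_integrableOn {l m : ℝ} (hl : 0 < l) (hm : 0 < m) :
    IntegrableOn (pf l m) (Ioi 0) := by
  rcases le_total m l with h | h
  · exact integrableOn_Ioi_deriv_of_nonneg' (fun x hx => pf_hasDeriv hl hm hx)
      (fun x hx => by
        have hx0 : (0:ℝ) < x := hx
        have h1 : (0:ℝ) < 1 + x := by linarith
        have h2 : (0:ℝ) < l + x * m := by nlinarith
        exact div_nonneg (mul_nonneg hl.le (by linarith)) (by positivity))
      (pf_tendsto hl hm)
  · have hneg : IntegrableOn (fun s => -pf l m s) (Ioi 0) := by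
      refine integrableOn_Ioi_deriv_of_nonneg'
        (g := fun u => -(l * (Real.log (1 + u) - Real.log (l + u * m))))
        (fun x hx => (pf_hasDeriv hl hm hx).neg)
        (fun x hx => ?_) (pf_tendsto hl hm).neg
      have hx0 : (0:ℝ) < x := hx
      have h1 : (0:ℝ) < 1 + x := by linarith
      have h2 : (0:ℝ) < l + x * m := by nlinarith
      have hnum : l * (l - m) ≤ 0 := mul_nonpos_iff.mpr (Or.inl ⟨hl.le, by linarith⟩)
      have : pf l m x ≤ 0 := div_nonpos_iff.mpr (Or.inr ⟨hnum, by positivity⟩)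
      linarith
    have h2 := hneg.neg
    simp only [Pi.neg_def, neg_neg] at h2
    exact h2

lemma pf_integral {l m : ℝ} (hl : 0 < l) (hm : 0 < m) :
    ∫ s in Ioi (0:ℝ), pf l m s = l * Real.log l - l * Real.log m := by
  rw [MeasureTheory.integral_Ioi_of_hasDerivAt_of_tendsto'
    (fun x hx => pf_hasDeriv hl hm hx) (pf_integrableOn hl hm) (pf_tendsto hl hm)]
  simp [Real.log_one]
  ring

lemma cpf_integrableOn (c l m : ℝ) (hl : 0 ≤ l) (hm : 0 ≤ m)
    (hsupp : 0 < l → m = 0 → c = 0) :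
    IntegrableOn (fun s => c * pf l m s) (Ioi 0) := by
  rcases hl.eq_or_lt with h | h
  · have : (fun s => c * pf l m s) = fun _ => 0 := by
      funext s; simp [pf, ← h]
    rw [this]
    exact integrableOn_zero
  · rcases hm.eq_or_lt with h2 | h2
    · rw [hsupp h h2.symm]
      simpa using (integrableOn_zero : IntegrableOn (fun _ : ℝ => (0:ℝ)) (Ioi 0))
    · exact (pf_integrableOn h h2).const_mul c

lemma cpf_integral (c l m : ℝ) (hl : 0 ≤ l) (hm : 0 ≤ m)
    (hsupp : 0 < l → m = 0 → c = 0) :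
    ∫ s in Ioi (0:ℝ), c * pf l m s = c * (l * Real.log l - l * Real.log m) := by
  rcases hl.eq_or_lt with h | h
  · have : (fun s => c * pf l m s) = fun _ => 0 := by
      funext s; simp [pf, ← h]
    rw [this]; simp [← h]
  · rcases hm.eq_or_lt with h2 | h2
    · rw [hsupp h h2.symm]; simp
    · rw [MeasureTheory.integral_const_mul, pf_integral h h2]

lemma pf_eq (l m : ℝ) (hl : 0 ≤ l) (hm : 0 ≤ m) {s : ℝ} (hs : 0 < s) :
    pf l m s = (l ^ 2 / (l + s * m) - l / (1 + s)) / s := by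
  rcases hl.eq_or_lt with h | h
  · simp [pf, ← h]
  · have h1 : (0:ℝ) < 1 + s := by linarith
    have h2 : (0:ℝ) < l + s * m := by nlinarith
    unfold pf
    field_simp
    ring

end Scalar

noncomputable def qf (s : ℝ) (A B Z : Matrix n n ℂ) : ℝ :=
  2 * ((star Z * A).trace).re - ((star Z * A * Z).trace).re - s * ((star Z * Z * B).trace).re

lemma qf_sum {ι : Type*} [Fintype ι] (s : ℝ) (p : ι → ℝ) (A B : ι → Matrix n n ℂ)
    (Z : Matrix n n ℂ) :
    qf s (∑ k, p k • A k) (∑ k, p k • B k) Z = ∑ k, p k * qf s (A k) (B k) Z := by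
  unfold qf
  simp only [Finset.mul_sum, Matrix.mul_smul, Matrix.smul_mul, Finset.sum_mul,
    Matrix.trace_sum, Matrix.trace_smul, Complex.re_sum, Complex.smul_re, smul_eq_mul]
  rw [← Finset.sum_sub_distrib, ← Finset.sum_sub_distrib]
  exact Finset.sum_congr rfl fun k _ => by ring

lemma trace_star_mul (W M : Matrix n n ℂ) :
    (star W * M).trace = ∑ i, ∑ j, (starRingEnd ℂ) (W i j) * M i j := by
  simp only [Matrix.trace, Matrix.diag, Matrix.mul_apply, Matrix.star_apply, Complex.star_def]
  rw [Finset.sum_comm]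

lemma trace_star_diag_self (W : Matrix n n ℂ) (α : n → ℝ) :
    ((star W * diagonal (fun i => (α i : ℂ)) * W).trace).re
      = ∑ i, ∑ j, α i * Complex.normSq (W i j) := by
  have key : ∀ (w : ℂ) (a : ℝ), ((starRingEnd ℂ) w * (a:ℂ) * w).re = a * Complex.normSq w := by
    intro w a
    rw [mul_comm ((starRingEnd ℂ) w) (a:ℂ), mul_assoc, mul_comm ((starRingEnd ℂ) w) w,
      Complex.mul_conj, ← Complex.ofReal_mul, Complex.ofReal_re]
  have e0 : ∀ j, ((star W * diagonal (fun i => (α i : ℂ)) * W) j j)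
      = ∑ i, (starRingEnd ℂ) (W i j) * (α i : ℂ) * W i j := by
    intro j
    rw [Matrix.mul_apply]
    refine Finset.sum_congr rfl fun i _ => ?_
    rw [Matrix.mul_diagonal, Matrix.star_apply, Complex.star_def]
  simp only [Matrix.trace, Matrix.diag, e0, Complex.re_sum]
  rw [Finset.sum_comm]
  exact Finset.sum_congr rfl fun i _ => Finset.sum_congr rfl fun j _ => key _ _

lemma trace_star_self_diag (W : Matrix n n ℂ) (β : n → ℝ) :
    ((star W * W * diagonal (fun j => (β j : ℂ))).trace).re
      = ∑ i, ∑ j, β j * Complex.normSq (W i j) := by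
  have key : ∀ (w : ℂ) (b : ℝ), ((starRingEnd ℂ) w * w * (b:ℂ)).re = b * Complex.normSq w := by
    intro w b
    rw [mul_comm ((starRingEnd ℂ) w) w, Complex.mul_conj, ← Complex.ofReal_mul, Complex.ofReal_re]
    ring
  have e0 : ∀ j, ((star W * W * diagonal (fun j => (β j : ℂ))) j j)
      = ∑ i, (starRingEnd ℂ) (W i j) * W i j * (β j : ℂ) := by
    intro j
    rw [Matrix.mul_diagonal, Matrix.mul_apply, Finset.sum_mul]
    refine Finset.sum_congr rfl fun i _ => ?_
    rw [Matrix.star_apply, Complex.star_def]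
  simp only [Matrix.trace, Matrix.diag, e0, Complex.re_sum]
  rw [Finset.sum_comm]
  exact Finset.sum_congr rfl fun i _ => Finset.sum_congr rfl fun j _ => key _ _

lemma q_expand (s : ℝ) (U V W : Matrix n n ℂ) (α β : n → ℝ)
    (hU : U * star U = 1) (hU' : star U * U = 1)
    (hV : V * star V = 1) (hV' : star V * V = 1) :
    qf s (U * diagonal (fun i => (α i : ℂ)) * star U)
         (V * diagonal (fun j => (β j : ℂ)) * star V)
         (U * W * star V)
      = ∑ i, ∑ j, (2 * ((starRingEnd ℂ) (W i j) * ((α i : ℂ) * (star U * V) i j)).re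
          - (α i + s * β j) * Complex.normSq (W i j)) := by
  have cancelU : ∀ X : Matrix n n ℂ, star U * (U * X) = X := fun X => by
    rw [← Matrix.mul_assoc, hU', Matrix.one_mul]
  have cancelV : ∀ X : Matrix n n ℂ, star V * (V * X) = X := fun X => by
    rw [← Matrix.mul_assoc, hV', Matrix.one_mul]
  have hZs : star (U * W * star V) = V * (star W * star U) := by
    simp only [Matrix.star_mul, star_star, Matrix.mul_assoc]
  set Dα : Matrix n n ℂ := diagonal (fun i => (α i : ℂ)) with hDα
  set Dβ : Matrix n n ℂ := diagonal (fun j => (β j : ℂ)) with hDβ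
  have eT1 : (star (U * W * star V) * (U * Dα * star U)).trace
      = (star W * (Dα * (star U * V))).trace := by
    rw [hZs]
    simp only [Matrix.mul_assoc, cancelU]
    rw [Matrix.trace_mul_comm]
    simp only [Matrix.mul_assoc]
  have eT2 : (star (U * W * star V) * (U * Dα * star U) * (U * W * star V)).trace
      = (star W * Dα * W).trace := by
    rw [hZs]
    simp only [Matrix.mul_assoc, cancelU]
    rw [Matrix.trace_mul_comm]
    simp only [Matrix.mul_assoc, cancelV]
    simp only [← Matrix.mul_assoc]
    rw [Matrix.mul_assoc _ (star V) V, hV', Matrix.mul_one]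
  have eT3 : (star (U * W * star V) * (U * W * star V) *
      (V * Dβ * star V)).trace = (star W * W * Dβ).trace := by
    rw [hZs]
    simp only [Matrix.mul_assoc, cancelU, cancelV]
    rw [Matrix.trace_mul_comm]
    simp only [Matrix.mul_assoc, cancelV]
    simp only [← Matrix.mul_assoc]
    rw [Matrix.mul_assoc _ (star V) V, hV', Matrix.mul_one]
  unfold qf
  rw [eT1, eT2, eT3, trace_star_mul]
  rw [trace_star_diag_self W α, trace_star_self_diag W β]
  simp only [Complex.re_sum, Finset.mul_sum, ← Finset.sum_sub_distrib]
  refine Finset.sum_congr rfl fun i _ => ?_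
  refine Finset.sum_congr rfl fun j _ => ?_
  rw [Matrix.diagonal_mul]
  ring
lemma unitary_facts {A : Matrix n n ℂ} (hA : A.IsHermitian) :
    (hA.eigenvectorUnitary : Matrix n n ℂ) * star (hA.eigenvectorUnitary : Matrix n n ℂ) = 1 ∧
    star (hA.eigenvectorUnitary : Matrix n n ℂ) * (hA.eigenvectorUnitary : Matrix n n ℂ) = 1 := by
  have h := hA.eigenvectorUnitary.2
  rw [Unitary.mem_iff] at h
  exact ⟨h.2, h.1⟩

lemma spectral_eq {A : Matrix n n ℂ} (hA : A.IsHermitian) :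
    A = (hA.eigenvectorUnitary : Matrix n n ℂ) *
        diagonal (fun i => (hA.eigenvalues i : ℂ)) *
        star (hA.eigenvectorUnitary : Matrix n n ℂ) := by
  exact hA.spectral_theorem

lemma cfc_form {A : Matrix n n ℂ} (hA : A.IsHermitian) (f : ℝ → ℝ) :
    hA.cfc f = (hA.eigenvectorUnitary : Matrix n n ℂ) *
        diagonal (fun i => (f (hA.eigenvalues i) : ℂ)) *
        star (hA.eigenvectorUnitary : Matrix n n ℂ) := by
  rw [Matrix.IsHermitian.cfc]
  rfl

lemma trace_diag_form (U : Matrix n n ℂ) (hU' : star U * U = 1) (a b : n → ℝ) :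
    ((U * diagonal (fun i => (a i : ℂ)) * star U) *
     (U * diagonal (fun i => (b i : ℂ)) * star U)).trace
      = ↑(∑ i, a i * b i) := by
  have cancelU : ∀ X : Matrix n n ℂ, star U * (U * X) = X := fun X => by
    rw [← Matrix.mul_assoc, hU', Matrix.one_mul]
  have h1 : (U * diagonal (fun i => (a i : ℂ)) * star U) *
      (U * diagonal (fun i => (b i : ℂ)) * star U)
      = U * (diagonal (fun i => (a i : ℂ)) * (diagonal (fun i => (b i : ℂ)) * star U)) := by
    simp only [Matrix.mul_assoc, cancelU]
  rw [h1, Matrix.trace_mul_comm]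
  simp only [Matrix.mul_assoc]
  rw [hU', Matrix.mul_one, Matrix.diagonal_mul_diagonal, Matrix.trace_diagonal]
  push_cast
  rfl

lemma sum_eigenvalues_eq_trace {A : Matrix n n ℂ} (hA : A.IsHermitian) :
    (∑ i, (hA.eigenvalues i : ℂ)) = A.trace := by
  obtain ⟨hU, hU'⟩ := unitary_facts hA
  conv_rhs => rw [spectral_eq hA]
  rw [Matrix.trace_mul_comm, ← Matrix.mul_assoc, hU', Matrix.one_mul, Matrix.trace_diagonal]

lemma sum_eigenvalues_eq_one {A : Matrix n n ℂ} (hA : A.IsHermitian) (h1 : A.trace = 1) :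
    ∑ i, hA.eigenvalues i = 1 := by
  have h := sum_eigenvalues_eq_trace hA
  rw [h1] at h
  exact_mod_cast h

lemma trace_mul_cfc {A : Matrix n n ℂ} (hA : A.IsHermitian) (f : ℝ → ℝ) :
    ((A * hA.cfc f).trace).re = ∑ i, hA.eigenvalues i * f (hA.eigenvalues i) := by
  obtain ⟨hU, hU'⟩ := unitary_facts hA
  have e1 : A * hA.cfc f = (hA.eigenvectorUnitary : Matrix n n ℂ) *
      diagonal (fun i => (hA.eigenvalues i : ℂ)) *
      star (hA.eigenvectorUnitary : Matrix n n ℂ) *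
      ((hA.eigenvectorUnitary : Matrix n n ℂ) *
      diagonal (fun i => (f (hA.eigenvalues i) : ℂ)) *
      star (hA.eigenvectorUnitary : Matrix n n ℂ)) := by
    rw [← spectral_eq hA, ← cfc_form hA f]
  rw [e1, trace_diag_form _ hU', Complex.ofReal_re]

lemma trace_diag_conj_re (U V : Matrix n n ℂ) (hU' : star U * U = 1) (hV : V * star V = 1)
    (a b : n → ℝ) :
    ((U * diagonal (fun i => (a i : ℂ)) * star U) *
     (V * diagonal (fun j => (b j : ℂ)) * star V)).trace.re
      = ∑ i, ∑ j, Complex.normSq ((star U * V) i j) * (a i * b j) := by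
  set S : Matrix n n ℂ := star U * V with hS
  have hstarS : star S = star V * U := by
    rw [hS]; simp only [Matrix.star_mul, star_star]
  have key : ((U * diagonal (fun i => (a i : ℂ)) * star U) *
      (V * diagonal (fun j => (b j : ℂ)) * star V)).trace
      = (diagonal (fun i => (a i : ℂ)) * S * diagonal (fun j => (b j : ℂ)) *
          star S).trace := by
    rw [hstarS, hS]
    simp only [Matrix.mul_assoc]
    rw [Matrix.trace_mul_comm]
    simp only [Matrix.mul_assoc]
  rw [key]
  have e2 : ∀ i, (diagonal (fun i => (a i : ℂ)) * S * diagonal (fun j => (b j : ℂ)) * star S) i i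
      = ∑ j, ((a i : ℂ) * S i j * (b j : ℂ)) * (starRingEnd ℂ) (S i j) := by
    intro i
    rw [Matrix.mul_apply]
    refine Finset.sum_congr rfl fun j _ => ?_
    rw [Matrix.star_apply, Complex.star_def]
    congr 1
    rw [Matrix.mul_diagonal, Matrix.diagonal_mul]
  simp only [Matrix.trace, Matrix.diag, e2, Complex.re_sum]
  refine Finset.sum_congr rfl fun i _ => Finset.sum_congr rfl fun j _ => ?_
  have : (a i : ℂ) * S i j * (b j : ℂ) * (starRingEnd ℂ) (S i j)
      = ((a i : ℂ) * (b j : ℂ)) * (S i j * (starRingEnd ℂ) (S i j)) := by ring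
  rw [this, Complex.mul_conj, ← Complex.ofReal_mul, ← Complex.ofReal_mul, Complex.ofReal_re]
  ring

lemma trace_mul_cfc' {A B : Matrix n n ℂ} (hA : A.IsHermitian) (hB : B.IsHermitian)
    (f : ℝ → ℝ) :
    ((A * hB.cfc f).trace).re
      = ∑ i, ∑ j, Complex.normSq
          ((star (hA.eigenvectorUnitary : Matrix n n ℂ) *
            (hB.eigenvectorUnitary : Matrix n n ℂ)) i j)
          * (hA.eigenvalues i * f (hB.eigenvalues j)) := by
  obtain ⟨hU, hU'⟩ := unitary_facts hA
  obtain ⟨hV, hV'⟩ := unitary_facts hB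
  have e1 : A * hB.cfc f = ((hA.eigenvectorUnitary : Matrix n n ℂ) *
      diagonal (fun i => (hA.eigenvalues i : ℂ)) *
      star (hA.eigenvectorUnitary : Matrix n n ℂ)) *
      ((hB.eigenvectorUnitary : Matrix n n ℂ) *
      diagonal (fun j => (f (hB.eigenvalues j) : ℂ)) *
      star (hB.eigenvectorUnitary : Matrix n n ℂ)) := by
    rw [← spectral_eq hA, ← cfc_form hB f]
  rw [e1, trace_diag_conj_re _ _ hU' hV]

lemma overlap_row_sum {A B : Matrix n n ℂ} (hA : A.IsHermitian) (hB : B.IsHermitian) (i : n) :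
    ∑ j, Complex.normSq
        ((star (hA.eigenvectorUnitary : Matrix n n ℂ) *
          (hB.eigenvectorUnitary : Matrix n n ℂ)) i j) = 1 := by
  obtain ⟨hU, hU'⟩ := unitary_facts hA
  obtain ⟨hV, hV'⟩ := unitary_facts hB
  set S : Matrix n n ℂ := star (hA.eigenvectorUnitary : Matrix n n ℂ) *
      (hB.eigenvectorUnitary : Matrix n n ℂ) with hS
  have hSS : S * star S = 1 := by
    rw [hS]
    simp only [Matrix.star_mul, star_star, Matrix.mul_assoc]
    rw [← Matrix.mul_assoc _ (star _) _]
    rw [show ((hB.eigenvectorUnitary : Matrix n n ℂ) *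
      star (hB.eigenvectorUnitary : Matrix n n ℂ)) = 1 from hV, Matrix.one_mul, hU']
  have h1 : (S * star S) i i = 1 := by rw [hSS, Matrix.one_apply_eq]
  rw [Matrix.mul_apply] at h1
  have h2 : ∀ j, S i j * star S j i = ((Complex.normSq (S i j) : ℝ) : ℂ) := by
    intro j
    rw [Matrix.star_apply, Complex.star_def, Complex.mul_conj]
  rw [Finset.sum_congr rfl fun j _ => h2 j] at h1
  have := congrArg Complex.re h1
  rw [Complex.re_sum] at this
  simpa using this

lemma relEnt_scalar {A B : Matrix n n ℂ} (hA : A.PosSemidef) (hB : B.PosSemidef) :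
    relEnt A B = ∑ i, ∑ j, Complex.normSq
        ((star (hA.1.eigenvectorUnitary : Matrix n n ℂ) *
          (hB.1.eigenvectorUnitary : Matrix n n ℂ)) i j)
        * (hA.1.eigenvalues i * Real.logb 2 (hA.1.eigenvalues i)
            - hA.1.eigenvalues i * Real.logb 2 (hB.1.eigenvalues j)) := by
  have e1 : mlog2 A = hA.1.cfc (fun x => Real.logb 2 x) := by
    rw [mlog2, dif_pos hA.1]
  have e2 : mlog2 B = hB.1.cfc (fun x => Real.logb 2 x) := by
    rw [mlog2, dif_pos hB.1]
  rw [relEnt, e1, e2, trace_mul_cfc hA.1, trace_mul_cfc' hA.1 hB.1]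
  rw [show (∑ i, hA.1.eigenvalues i * Real.logb 2 (hA.1.eigenvalues i))
      = ∑ i, ∑ j, Complex.normSq
          ((star (hA.1.eigenvectorUnitary : Matrix n n ℂ) *
            (hB.1.eigenvectorUnitary : Matrix n n ℂ)) i j)
          * (hA.1.eigenvalues i * Real.logb 2 (hA.1.eigenvalues i)) from ?_]
  · rw [← Finset.sum_sub_distrib]
    refine Finset.sum_congr rfl fun i _ => ?_
    rw [← Finset.sum_sub_distrib]
    refine Finset.sum_congr rfl fun j _ => ?_
    ring
  · refine Finset.sum_congr rfl fun i _ => ?_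
    rw [← Finset.sum_mul, overlap_row_sum hA.1 hB.1 i, one_mul]

lemma star_kronecker {m p : Type*} [Fintype m] [Fintype p]
    (A : Matrix m m ℂ) (B : Matrix p p ℂ) :
    star (A ⊗ₖ B) = star A ⊗ₖ star B := by
  ext ⟨i, j⟩ ⟨k, l⟩
  simp only [Matrix.star_apply, Matrix.kroneckerMap_apply, star_mul']

lemma posSemidef_kronecker {m p : Type*} [Fintype m] [Fintype p]
    {A : Matrix m m ℂ} {B : Matrix p p ℂ} (hA : A.PosSemidef) (hB : B.PosSemidef) :
    (A ⊗ₖ B).PosSemidef := by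
  exact hA.kronecker hB

lemma posSemidef_smul {A : Matrix n n ℂ} (hA : A.PosSemidef) {c : ℝ} (hc : 0 ≤ c) :
    (c • A).PosSemidef := by
  refine Matrix.PosSemidef.of_dotProduct_mulVec_nonneg ?_ ?_
  · show (c • A)ᴴ = c • A
    rw [Matrix.conjTranspose_smul, star_trivial, hA.1]
  · intro x
    have h1 : (c • A) *ᵥ x = c • (A *ᵥ x) := Matrix.smul_mulVec c A x
    rw [h1]
    have h2 : star x ⬝ᵥ (c • (A *ᵥ x)) = (c : ℂ) * (star x ⬝ᵥ (A *ᵥ x)) := by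
      rw [dotProduct_smul]
      simp [Complex.real_smul]
    rw [h2]
    exact mul_nonneg (by exact_mod_cast hc) (hA.dotProduct_mulVec_nonneg x)

lemma posSemidef_sum {ι : Type*} [Fintype ι] {A : ι → Matrix n n ℂ}
    (h : ∀ k, (A k).PosSemidef) : (∑ k, A k).PosSemidef := by
  classical
  refine Finset.sum_induction A Matrix.PosSemidef (fun a b ha hb => ha.add hb)
    Matrix.PosSemidef.zero (fun i _ => h i)

lemma sum_smul_kronecker {m p ι : Type*} [Fintype m] [Fintype p] [Fintype ι]
    (c : ι → ℝ) (A : ι → Matrix m m ℂ) (B : Matrix p p ℂ) :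
    (∑ k, c k • A k) ⊗ₖ B = ∑ k, c k • (A k ⊗ₖ B) := by
  ext ⟨i, j⟩ ⟨k, l⟩
  simp only [Matrix.kroneckerMap_apply, Matrix.sum_apply, Matrix.smul_apply,
    Finset.sum_mul, smul_mul_assoc]

lemma kernel_transfer {dA dB : Type*} [Fintype dA] [DecidableEq dA] [Fintype dB]
    [DecidableEq dB] {τ : Matrix dA dA ℂ} {ω σ : Matrix dB dB ℂ}
    (hσ : σ.PosDef) (v : dA × dB → ℂ) (h : (τ ⊗ₖ σ) *ᵥ v = 0) :
    (τ ⊗ₖ ω) *ᵥ v = 0 := by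
  have hdet : IsUnit σ.det := isUnit_iff_ne_zero.mpr hσ.det_pos.ne'
  have h1 : ((1 : Matrix dA dA ℂ) ⊗ₖ σ) *ᵥ ((τ ⊗ₖ (1 : Matrix dB dB ℂ)) *ᵥ v) = 0 := by
    rw [Matrix.mulVec_mulVec, ← Matrix.mul_kronecker_mul, Matrix.one_mul, Matrix.mul_one]
    exact h
  have h2 : (τ ⊗ₖ (1 : Matrix dB dB ℂ)) *ᵥ v = 0 := by
    have h3 := congrArg (fun w => ((1 : Matrix dA dA ℂ) ⊗ₖ σ⁻¹) *ᵥ w) h1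
    simp only [Matrix.mulVec_zero] at h3
    rw [Matrix.mulVec_mulVec, ← Matrix.mul_kronecker_mul, Matrix.one_mul,
      Matrix.nonsing_inv_mul σ hdet, Matrix.one_kronecker_one, Matrix.one_mulVec] at h3
    exact h3
  calc (τ ⊗ₖ ω) *ᵥ v = (((1 : Matrix dA dA ℂ) ⊗ₖ ω) * (τ ⊗ₖ (1 : Matrix dB dB ℂ))) *ᵥ v := by
        rw [← Matrix.mul_kronecker_mul, Matrix.one_mul, Matrix.mul_one]
    _ = ((1 : Matrix dA dA ℂ) ⊗ₖ ω) *ᵥ ((τ ⊗ₖ (1 : Matrix dB dB ℂ)) *ᵥ v) := by rw [Matrix.mulVec_mulVec]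
    _ = 0 := by rw [h2, Matrix.mulVec_zero]

lemma qf_kron_le {dA dB : Type*} [Fintype dA] [DecidableEq dA] [Fintype dB] [DecidableEq dB]
    {s : ℝ} (hs : 0 < s) {τ : Matrix dA dA ℂ} {ω σ : Matrix dB dB ℂ}
    (hτ : τ.PosSemidef) (hτ1 : τ.trace = 1) (hω : ω.PosSemidef) (hσ : σ.PosDef)
    (Z : Matrix (dA × dB) (dA × dB) ℂ) :
    qf s (τ ⊗ₖ ω) (τ ⊗ₖ σ) Z
      ≤ ∑ b, ∑ d, Complex.normSq
          ((star (hω.1.eigenvectorUnitary : Matrix dB dB ℂ) *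
            (hσ.1.eigenvectorUnitary : Matrix dB dB ℂ)) b d)
          * ((hω.1.eigenvalues b) ^ 2 / (hω.1.eigenvalues b + s * hσ.1.eigenvalues d)) := by
  classical
  have hτeq := spectral_eq hτ.1
  have hωeq := spectral_eq hω.1
  have hσeq := spectral_eq hσ.1
  obtain ⟨hP, hP'⟩ := unitary_facts hτ.1
  obtain ⟨hQ, hQ'⟩ := unitary_facts hω.1
  obtain ⟨hR, hR'⟩ := unitary_facts hσ.1
  have ht0 : ∀ a, 0 ≤ hτ.1.eigenvalues a := hτ.eigenvalues_nonneg
  have hw0 : ∀ b, 0 ≤ hω.1.eigenvalues b := hω.eigenvalues_nonneg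
  have hg0 : ∀ d, 0 < hσ.1.eigenvalues d := hσ.eigenvalues_pos
  have ht1 : ∑ a, hτ.1.eigenvalues a = 1 := sum_eigenvalues_eq_one hτ.1 hτ1
  set t := hτ.1.eigenvalues with htdef
  set w := hω.1.eigenvalues with hwdef
  set g := hσ.1.eigenvalues with hgdef
  set P := (hτ.1.eigenvectorUnitary : Matrix dA dA ℂ) with hPdef
  set Q := (hω.1.eigenvectorUnitary : Matrix dB dB ℂ) with hQdef
  set R := (hσ.1.eigenvectorUnitary : Matrix dB dB ℂ) with hRdef
  have hPQ : (P ⊗ₖ Q) * star (P ⊗ₖ Q) = 1 := by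
    rw [star_kronecker, ← Matrix.mul_kronecker_mul, hP, hQ, Matrix.one_kronecker_one]
  have hPQ' : star (P ⊗ₖ Q) * (P ⊗ₖ Q) = 1 := by
    rw [star_kronecker, ← Matrix.mul_kronecker_mul, hP', hQ', Matrix.one_kronecker_one]
  have hPR : (P ⊗ₖ R) * star (P ⊗ₖ R) = 1 := by
    rw [star_kronecker, ← Matrix.mul_kronecker_mul, hP, hR, Matrix.one_kronecker_one]
  have hPR' : star (P ⊗ₖ R) * (P ⊗ₖ R) = 1 := by
    rw [star_kronecker, ← Matrix.mul_kronecker_mul, hP', hR', Matrix.one_kronecker_one]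
  have hA : τ ⊗ₖ ω = (P ⊗ₖ Q) *
      diagonal (fun i : dA × dB => ((t i.1 * w i.2 : ℝ) : ℂ)) * star (P ⊗ₖ Q) := by
    rw [hτeq, hωeq, Matrix.mul_kronecker_mul, Matrix.mul_kronecker_mul,
      Matrix.diagonal_kronecker_diagonal, ← star_kronecker]
    congr 2
    funext i
    push_cast
    ring
  have hB : τ ⊗ₖ σ = (P ⊗ₖ R) *
      diagonal (fun j : dA × dB => ((t j.1 * g j.2 : ℝ) : ℂ)) * star (P ⊗ₖ R) := by
    rw [hτeq, hσeq, Matrix.mul_kronecker_mul, Matrix.mul_kronecker_mul,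
      Matrix.diagonal_kronecker_diagonal, ← star_kronecker]
    congr 2
    funext i
    push_cast
    ring
  set W := star (P ⊗ₖ Q) * Z * (P ⊗ₖ R) with hWdef
  have hZ : Z = (P ⊗ₖ Q) * W * star (P ⊗ₖ R) := by
    rw [hWdef]
    simp only [← Matrix.mul_assoc]
    rw [hPQ, Matrix.one_mul, Matrix.mul_assoc, hPR, Matrix.mul_one]
  have hS : star (P ⊗ₖ Q) * (P ⊗ₖ R) = (1 : Matrix dA dA ℂ) ⊗ₖ (star Q * R) := by
    rw [star_kronecker, ← Matrix.mul_kronecker_mul, hP']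
  rw [hA, hB, hZ,
    q_expand s (P ⊗ₖ Q) (P ⊗ₖ R) W (fun i => t i.1 * w i.2) (fun j => t j.1 * g j.2)
      hPQ hPQ' hPR hPR', hS]
  have step1 : ∀ i j : dA × dB,
      2 * ((starRingEnd ℂ) (W i j) *
          (((t i.1 * w i.2 : ℝ) : ℂ) * ((1 : Matrix dA dA ℂ) ⊗ₖ (star Q * R)) i j)).re
        - (t i.1 * w i.2 + s * (t j.1 * g j.2)) * Complex.normSq (W i j)
      ≤ Complex.normSq (((t i.1 * w i.2 : ℝ) : ℂ) *
          ((1 : Matrix dA dA ℂ) ⊗ₖ (star Q * R)) i j)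
        / (t i.1 * w i.2 + s * (t j.1 * g j.2)) := by
    intro i j
    refine key_quad _ _ _ ?_ ?_
    · have := mul_nonneg (ht0 i.1) (hw0 i.2)
      have := mul_nonneg (ht0 j.1) (hg0 j.2).le
      nlinarith [hs.le]
    · intro hd0
      have h1 : t j.1 * g j.2 = 0 := by
        have h2 := mul_nonneg (ht0 i.1) (hw0 i.2)
        have h3 := mul_nonneg (ht0 j.1) (hg0 j.2).le
        nlinarith [hs]
      have htj : t j.1 = 0 := by
        rcases mul_eq_zero.mp h1 with h | h
        · exact h
        · exact absurd h (hg0 j.2).ne'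
      rcases eq_or_ne i.1 j.1 with he | hne
      · have hti : t i.1 = 0 := by rw [he]; exact htj
        rw [hti]
        simp
      · rw [Matrix.kroneckerMap_apply, Matrix.one_apply_ne hne]
        simp
  refine le_trans (Finset.sum_le_sum fun i _ => Finset.sum_le_sum fun j _ => step1 i j) ?_
  have scalar_kron : ∀ (ta wb gd c : ℝ), 0 ≤ ta → 0 ≤ wb → 0 < gd → 0 ≤ c →
      (ta * wb) * (ta * wb) * c / (ta * wb + s * (ta * gd))
        = ta * (c * (wb ^ 2 / (wb + s * gd))) := by
    intro ta wb gd c hta hwb hgd hc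
    rcases hta.eq_or_lt with h | h
    · rw [← h]; simp
    · have hden : 0 < wb + s * gd := by nlinarith
      have hden2 : 0 < ta * wb + s * (ta * gd) := by nlinarith
      field_simp
  have step2 : (∑ i : dA × dB, ∑ j : dA × dB,
      Complex.normSq (((t i.1 * w i.2 : ℝ) : ℂ) *
          ((1 : Matrix dA dA ℂ) ⊗ₖ (star Q * R)) i j)
        / (t i.1 * w i.2 + s * (t j.1 * g j.2)))
      = ∑ a, t a * (∑ b, ∑ d, Complex.normSq ((star Q * R) b d)
          * (w b ^ 2 / (w b + s * g d))) := by
    rw [Fintype.sum_prod_type]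
    refine Finset.sum_congr rfl fun a _ => ?_
    have hrow : ∀ b, (∑ j : dA × dB,
        Complex.normSq (((t a * w b : ℝ) : ℂ) *
            ((1 : Matrix dA dA ℂ) ⊗ₖ (star Q * R)) (a, b) j)
          / (t a * w b + s * (t j.1 * g j.2)))
        = ∑ d, t a * (Complex.normSq ((star Q * R) b d) * (w b ^ 2 / (w b + s * g d))) := by
      intro b
      rw [Fintype.sum_prod_type]
      rw [Finset.sum_eq_single a (fun c _ hc => ?_) (fun hc => absurd (Finset.mem_univ a) hc)]
      · refine Finset.sum_congr rfl fun d _ => ?_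
        rw [Matrix.kroneckerMap_apply, Matrix.one_apply_eq, one_mul,
          Complex.normSq_mul, Complex.normSq_ofReal]
        exact scalar_kron (t a) (w b) (g d) _ (ht0 a) (hw0 b) (hg0 d) (Complex.normSq_nonneg _)
      · refine Finset.sum_eq_zero fun d _ => ?_
        rw [Matrix.kroneckerMap_apply, Matrix.one_apply_ne (Ne.symm hc)]
        simp
    calc (∑ b, ∑ j : dA × dB,
        Complex.normSq (((t a * w b : ℝ) : ℂ) *
            ((1 : Matrix dA dA ℂ) ⊗ₖ (star Q * R)) (a, b) j)
          / (t a * w b + s * (t j.1 * g j.2)))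
        = ∑ b, ∑ d, t a * (Complex.normSq ((star Q * R) b d)
            * (w b ^ 2 / (w b + s * g d))) := Finset.sum_congr rfl fun b _ => hrow b
      _ = t a * (∑ b, ∑ d, Complex.normSq ((star Q * R) b d)
            * (w b ^ 2 / (w b + s * g d))) := by
          rw [Finset.mul_sum]
          exact Finset.sum_congr rfl fun b _ => (Finset.mul_sum _ _ _).symm
  rw [step2, ← Finset.sum_mul, ht1, one_mul]

lemma sum_smul_mulVec {ι : Type*} [Fintype ι] (p : ι → ℝ) (A : ι → Matrix n n ℂ)
    (v : n → ℂ) : (∑ k, p k • A k) *ᵥ v = ∑ k, p k • (A k *ᵥ v) := by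
  ext r
  simp only [Matrix.mulVec, dotProduct, Matrix.sum_apply, Matrix.smul_apply,
    Finset.sum_apply, Pi.smul_apply, Finset.sum_mul, smul_mul_assoc, Finset.smul_sum]
  rw [Finset.sum_comm]

lemma dot_sum {ι : Type*} [Fintype ι] (v : n → ℂ) (y : ι → n → ℂ) :
    v ⬝ᵥ (∑ k, y k) = ∑ k, v ⬝ᵥ y k := by
  simp only [dotProduct, Finset.sum_apply, Finset.mul_sum]
  rw [Finset.sum_comm]

lemma core_ineq {dA dB ι : Type*}
    [Fintype dA] [DecidableEq dA] [Fintype dB] [DecidableEq dB] [Fintype ι]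
    (p : ι → ℝ) (τ : ι → Matrix dA dA ℂ) (ω : ι → Matrix dB dB ℂ) (σ : Matrix dB dB ℂ)
    (hp0 : ∀ k, 0 ≤ p k) (hp1 : ∑ k, p k = 1)
    (hτ : ∀ k, (τ k).PosSemidef) (hτ1 : ∀ k, (τ k).trace = 1)
    (hω : ∀ k, (ω k).PosSemidef) (hω1 : ∀ k, (ω k).trace = 1) (hσ : σ.PosDef)
    (ρ Bm : Matrix (dA × dB) (dA × dB) ℂ) (Λ M : dA × dB → ℝ)
    (U V : Matrix (dA × dB) (dA × dB) ℂ)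
    (hUu : U * star U = 1) (hUu' : star U * U = 1)
    (hVu : V * star V = 1) (hVu' : star V * V = 1)
    (hρeq : ρ = U * diagonal (fun i => (Λ i : ℂ)) * star U)
    (hBeq : Bm = V * diagonal (fun j => (M j : ℂ)) * star V)
    (hρsum : ρ = ∑ k, p k • (τ k ⊗ₖ ω k))
    (hBsum : Bm = ∑ k, p k • (τ k ⊗ₖ σ))
    (hΛ0 : ∀ i, 0 ≤ Λ i) (hM0 : ∀ j, 0 ≤ M j) (hΛ1 : ∑ i, Λ i = 1)
    (hCrow : ∀ i, ∑ j, Complex.normSq ((star U * V) i j) = 1) :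
    ∑ i, ∑ j, Complex.normSq ((star U * V) i j)
        * (Λ i * Real.logb 2 (Λ i) - Λ i * Real.logb 2 (M j))
      ≤ ∑ k, p k * relEnt (ω k) σ := by
  classical
  have hσps : σ.PosSemidef := hσ.posSemidef
  have hσfix : hσps.1 = hσ.1 := rfl
  have hg0 : ∀ d, 0 < hσ.1.eigenvalues d := hσ.eigenvalues_pos
  have hw0 : ∀ k b, 0 ≤ (hω k).1.eigenvalues b := fun k => (hω k).eigenvalues_nonneg
  have hwsum : ∀ k, ∑ b, (hω k).1.eigenvalues b = 1 :=
    fun k => sum_eigenvalues_eq_one (hω k).1 (hω1 k)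
  have hCkrow : ∀ k b, ∑ d, Complex.normSq
      ((star ((hω k).1.eigenvectorUnitary : Matrix dB dB ℂ) *
        (hσ.1.eigenvectorUnitary : Matrix dB dB ℂ)) b d) = 1 :=
    fun k => overlap_row_sum (hω k).1 hσ.1
  have hRk : ∀ k, relEnt (ω k) σ = ∑ b, ∑ d, Complex.normSq
      ((star ((hω k).1.eigenvectorUnitary : Matrix dB dB ℂ) *
        (hσ.1.eigenvectorUnitary : Matrix dB dB ℂ)) b d)
      * ((hω k).1.eigenvalues b * Real.logb 2 ((hω k).1.eigenvalues b)
          - (hω k).1.eigenvalues b * Real.logb 2 (hσ.1.eigenvalues d)) := by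
    intro k
    have h := relEnt_scalar (hω k) hσps
    rw [hσfix] at h
    exact h
  -- support property
  have hsupp : ∀ i j, 0 < Λ i → M j = 0 → (star U * V) i j = 0 := by
    intro i j hΛi hMj
    have hBV : Bm * V = V * diagonal (fun j' => (M j' : ℂ)) := by
      rw [hBeq]
      simp only [Matrix.mul_assoc]
      rw [hVu', Matrix.mul_one]
    have hBv : Bm *ᵥ (fun r => V r j) = 0 := by
      funext r
      have h1 : (Bm * V) r j = (V * diagonal (fun j' => (M j' : ℂ))) r j := by rw [hBV]
      rw [Matrix.mul_diagonal, hMj, Complex.ofReal_zero, mul_zero] at h1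
      have h2 : (Bm *ᵥ (fun r => V r j)) r = (Bm * V) r j := by
        simp [Matrix.mulVec, dotProduct, Matrix.mul_apply]
      rw [h2, h1, Pi.zero_apply]
    have hBsumv : (∑ k, p k • (τ k ⊗ₖ σ)) *ᵥ (fun r => V r j) = 0 := by
      rw [← hBsum]; exact hBv
    have hsum0 : ∑ k, p k • (star (fun r => V r j) ⬝ᵥ ((τ k ⊗ₖ σ) *ᵥ (fun r => V r j))) = 0 := by
      have e1 : star (fun r => V r j) ⬝ᵥ ((∑ k, p k • (τ k ⊗ₖ σ)) *ᵥ (fun r => V r j)) = 0 := by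
        rw [hBsumv, dotProduct_zero]
      rw [sum_smul_mulVec, dot_sum] at e1
      rw [← e1]
      exact Finset.sum_congr rfl fun k _ => (dotProduct_smul _ _ _).symm
    have hterm0 : ∀ k, p k • (star (fun r => V r j) ⬝ᵥ ((τ k ⊗ₖ σ) *ᵥ (fun r => V r j))) = 0 := by
      have hnn : ∀ k ∈ Finset.univ,
          (0:ℂ) ≤ p k • (star (fun r => V r j) ⬝ᵥ ((τ k ⊗ₖ σ) *ᵥ (fun r => V r j))) := by
        intro k _
        have hpsd := posSemidef_kronecker (hτ k) hσps
        have h2 := hpsd.dotProduct_mulVec_nonneg (fun r => V r j)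
        rw [Complex.real_smul]
        exact mul_nonneg (by exact_mod_cast hp0 k) h2
      exact fun k => (Finset.sum_eq_zero_iff_of_nonneg hnn).mp hsum0 k (Finset.mem_univ k)
    have hρv : ρ *ᵥ (fun r => V r j) = 0 := by
      rw [hρsum, sum_smul_mulVec]
      refine Finset.sum_eq_zero fun k _ => ?_
      rcases (hp0 k).eq_or_lt with hp | hp
      · rw [← hp, zero_smul]
      · have h1 : star (fun r => V r j) ⬝ᵥ ((τ k ⊗ₖ σ) *ᵥ (fun r => V r j)) = 0 := by
          have h2 := hterm0 k
          rw [Complex.real_smul] at h2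
          refine (mul_eq_zero.mp h2).resolve_left ?_
          exact_mod_cast hp.ne'
        have h2 : (τ k ⊗ₖ σ) *ᵥ (fun r => V r j) = 0 :=
          ((posSemidef_kronecker (hτ k) hσps).dotProduct_mulVec_zero_iff _).mp h1
        rw [kernel_transfer hσ _ h2, smul_zero]
    have hUρV : star U * (ρ * V) = diagonal (fun i' => (Λ i' : ℂ)) * (star U * V) := by
      rw [hρeq]
      simp only [Matrix.mul_assoc]
      rw [← Matrix.mul_assoc (star U) U, hUu', Matrix.one_mul]
    have hentry : (star U * (ρ * V)) i j = 0 := by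
      rw [Matrix.mul_apply]
      refine Finset.sum_eq_zero fun r _ => ?_
      have h3 : (ρ * V) r j = (ρ *ᵥ (fun r => V r j)) r := by
        simp [Matrix.mulVec, dotProduct, Matrix.mul_apply]
      rw [h3, hρv, Pi.zero_apply, mul_zero]
    rw [hUρV, Matrix.diagonal_mul] at hentry
    rcases mul_eq_zero.mp hentry with h | h
    · exact absurd (by exact_mod_cast h : Λ i = 0) hΛi.ne'
    · exact h
  -- integrand functions
  set FL : ℝ → ℝ := fun u => ∑ i, ∑ j, Complex.normSq ((star U * V) i j)
      * pf (Λ i) (M j) u with hFLdef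
  set FR : ι → ℝ → ℝ := fun k u => ∑ b, ∑ d, Complex.normSq
      ((star ((hω k).1.eigenvectorUnitary : Matrix dB dB ℂ) *
        (hσ.1.eigenvectorUnitary : Matrix dB dB ℂ)) b d)
      * pf ((hω k).1.eigenvalues b) (hσ.1.eigenvalues d) u with hFRdef
  have hintL : ∀ i j, MeasureTheory.IntegrableOn
      (fun u => Complex.normSq ((star U * V) i j) * pf (Λ i) (M j) u) (Set.Ioi 0) :=
    fun i j => cpf_integrableOn _ _ _ (hΛ0 i) (hM0 j)
      (fun hl hm => by rw [hsupp i j hl hm]; simp)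
  have hintR : ∀ k b d, MeasureTheory.IntegrableOn
      (fun u => Complex.normSq ((star ((hω k).1.eigenvectorUnitary : Matrix dB dB ℂ) *
        (hσ.1.eigenvectorUnitary : Matrix dB dB ℂ)) b d)
        * pf ((hω k).1.eigenvalues b) (hσ.1.eigenvalues d) u) (Set.Ioi 0) :=
    fun k b d => cpf_integrableOn _ _ _ (hw0 k b) (hg0 d).le
      (fun _ hm => absurd hm (hg0 d).ne')
  have hFLint : MeasureTheory.IntegrableOn FL (Set.Ioi 0) :=
    MeasureTheory.integrable_finset_sum _ fun i _ =>
      MeasureTheory.integrable_finset_sum _ fun j _ => hintL i j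
  have hFRint : ∀ k, MeasureTheory.IntegrableOn (FR k) (Set.Ioi 0) :=
    fun k => MeasureTheory.integrable_finset_sum _ fun b _ =>
      MeasureTheory.integrable_finset_sum _ fun d _ => hintR k b d
  have hlog2 : (0:ℝ) < Real.log 2 := Real.log_pos one_lt_two
  have hFLval : ∫ u in Set.Ioi (0:ℝ), FL u
      = Real.log 2 * ∑ i, ∑ j, Complex.normSq ((star U * V) i j)
          * (Λ i * Real.logb 2 (Λ i) - Λ i * Real.logb 2 (M j)) := by
    simp only [hFLdef]
    rw [MeasureTheory.integral_finset_sum _ fun i _ =>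
      MeasureTheory.integrable_finset_sum _ fun j _ => hintL i j]
    rw [Finset.sum_congr rfl fun i (_ : i ∈ Finset.univ) =>
      MeasureTheory.integral_finset_sum _ fun j _ => hintL i j]
    rw [Finset.sum_congr rfl fun i (_ : i ∈ Finset.univ) => Finset.sum_congr rfl
      fun j _ => cpf_integral _ _ _ (hΛ0 i) (hM0 j)
        (fun hl hm => by rw [hsupp i j hl hm]; simp)]
    rw [Finset.mul_sum]
    refine Finset.sum_congr rfl fun i _ => ?_
    rw [Finset.mul_sum]
    refine Finset.sum_congr rfl fun j _ => ?_
    simp only [← Real.log_div_log]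
    field_simp
    try ring
  have hFRval : ∀ k, ∫ u in Set.Ioi (0:ℝ), FR k u = Real.log 2 * relEnt (ω k) σ := by
    intro k
    simp only [hFRdef]
    rw [MeasureTheory.integral_finset_sum _ fun b _ =>
      MeasureTheory.integrable_finset_sum _ fun d _ => hintR k b d]
    rw [Finset.sum_congr rfl fun b (_ : b ∈ Finset.univ) =>
      MeasureTheory.integral_finset_sum _ fun d _ => hintR k b d]
    rw [Finset.sum_congr rfl fun b (_ : b ∈ Finset.univ) => Finset.sum_congr rfl
      fun d _ => cpf_integral _ _ _ (hw0 k b) (hg0 d).le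
        (fun _ hm => absurd hm (hg0 d).ne')]
    rw [hRk k, Finset.mul_sum]
    refine Finset.sum_congr rfl fun b _ => ?_
    rw [Finset.mul_sum]
    refine Finset.sum_congr rfl fun d _ => ?_
    simp only [← Real.log_div_log]
    field_simp
    try ring
  have hpoint : ∀ u ∈ Set.Ioi (0:ℝ), FL u ≤ ∑ k, p k * FR k u := by
    intro u hu
    have hu0 : (0:ℝ) < u := hu
    have hL : FL u = ((∑ i, ∑ j, Complex.normSq ((star U * V) i j)
        * (Λ i ^ 2 / (Λ i + u * M j))) - 1 / (1 + u)) / u := by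
      simp only [hFLdef]
      have e1 : ∀ i j, Complex.normSq ((star U * V) i j) * pf (Λ i) (M j) u
          = (Complex.normSq ((star U * V) i j) * (Λ i ^ 2 / (Λ i + u * M j))
            - Complex.normSq ((star U * V) i j) * (Λ i / (1 + u))) / u := by
        intro i j
        rw [pf_eq _ _ (hΛ0 i) (hM0 j) hu0]
        ring
      rw [Finset.sum_congr rfl fun i (_ : i ∈ Finset.univ) =>
        Finset.sum_congr rfl fun j _ => e1 i j]
      simp only [← Finset.sum_div]
      congr 1
      simp only [Finset.sum_sub_distrib]
      congr 1
      have e2 : ∀ i, ∑ j, Complex.normSq ((star U * V) i j) * (Λ i / (1 + u))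
          = Λ i / (1 + u) := by
        intro i
        rw [← Finset.sum_mul, hCrow i, one_mul]
      rw [Finset.sum_congr rfl fun i (_ : i ∈ Finset.univ) => e2 i, ← Finset.sum_div, hΛ1]
    have hRku : ∀ k, FR k u = ((∑ b, ∑ d, Complex.normSq
        ((star ((hω k).1.eigenvectorUnitary : Matrix dB dB ℂ) *
          (hσ.1.eigenvectorUnitary : Matrix dB dB ℂ)) b d)
        * ((hω k).1.eigenvalues b ^ 2 / ((hω k).1.eigenvalues b + u * hσ.1.eigenvalues d)))
        - 1 / (1 + u)) / u := by
      intro k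
      simp only [hFRdef]
      have e1 : ∀ b d, Complex.normSq
          ((star ((hω k).1.eigenvectorUnitary : Matrix dB dB ℂ) *
            (hσ.1.eigenvectorUnitary : Matrix dB dB ℂ)) b d)
          * pf ((hω k).1.eigenvalues b) (hσ.1.eigenvalues d) u
          = (Complex.normSq ((star ((hω k).1.eigenvectorUnitary : Matrix dB dB ℂ) *
              (hσ.1.eigenvectorUnitary : Matrix dB dB ℂ)) b d)
            * ((hω k).1.eigenvalues b ^ 2 / ((hω k).1.eigenvalues b + u * hσ.1.eigenvalues d))
            - Complex.normSq ((star ((hω k).1.eigenvectorUnitary : Matrix dB dB ℂ) *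
              (hσ.1.eigenvectorUnitary : Matrix dB dB ℂ)) b d)
            * ((hω k).1.eigenvalues b / (1 + u))) / u := by
        intro b d
        rw [pf_eq _ _ (hw0 k b) (hg0 d).le hu0]
        ring
      rw [Finset.sum_congr rfl fun b (_ : b ∈ Finset.univ) =>
        Finset.sum_congr rfl fun d _ => e1 b d]
      simp only [← Finset.sum_div]
      congr 1
      simp only [Finset.sum_sub_distrib]
      congr 1
      have e2 : ∀ b, ∑ d, Complex.normSq
          ((star ((hω k).1.eigenvectorUnitary : Matrix dB dB ℂ) *
            (hσ.1.eigenvectorUnitary : Matrix dB dB ℂ)) b d)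
          * ((hω k).1.eigenvalues b / (1 + u)) = (hω k).1.eigenvalues b / (1 + u) := by
        intro b
        rw [← Finset.sum_mul, hCkrow k b, one_mul]
      rw [Finset.sum_congr rfl fun b (_ : b ∈ Finset.univ) => e2 b, ← Finset.sum_div, hwsum k]
    have hRHS : (∑ k, p k * FR k u)
        = ((∑ k, p k * (∑ b, ∑ d, Complex.normSq
          ((star ((hω k).1.eigenvectorUnitary : Matrix dB dB ℂ) *
            (hσ.1.eigenvectorUnitary : Matrix dB dB ℂ)) b d)
          * ((hω k).1.eigenvalues b ^ 2 / ((hω k).1.eigenvalues b + u * hσ.1.eigenvalues d))))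
          - 1 / (1 + u)) / u := by
      rw [Finset.sum_congr rfl fun k (_ : k ∈ Finset.univ) =>
        congrArg (fun x => p k * x) (hRku k)]
      rw [Finset.sum_congr rfl fun k (_ : k ∈ Finset.univ) => (mul_div_assoc (p k) _ u).symm,
        ← Finset.sum_div]
      congr 1
      rw [Finset.sum_congr rfl fun k (_ : k ∈ Finset.univ) => mul_sub (p k) _ _,
        Finset.sum_sub_distrib, ← Finset.sum_mul, hp1, one_mul]
    rw [hL, hRHS, div_le_div_iff_of_pos_right hu0]
    apply sub_le_sub_right
    set W0 : Matrix (dA × dB) (dA × dB) ℂ :=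
      Matrix.of (fun i j => ((Λ i : ℂ) * (star U * V) i j) / ((Λ i + u * M j : ℝ) : ℂ))
      with hW0def
    have hq2 : qf u ρ Bm (U * W0 * star V)
        = ∑ i, ∑ j, Complex.normSq ((star U * V) i j) * (Λ i ^ 2 / (Λ i + u * M j)) := by
      rw [hρeq, hBeq, q_expand u U V W0 Λ M hUu hUu' hVu hVu']
      refine Finset.sum_congr rfl fun i _ => Finset.sum_congr rfl fun j _ => ?_
      have e3 : W0 i j = ((Λ i : ℂ) * (star U * V) i j) / ((Λ i + u * M j : ℝ) : ℂ) := rfl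
      rw [e3, key_quad_eq]
      rw [Complex.normSq_mul, Complex.normSq_ofReal]
      ring
    have hq3 : qf u ρ Bm (U * W0 * star V)
        = ∑ k, p k * qf u (τ k ⊗ₖ ω k) (τ k ⊗ₖ σ) (U * W0 * star V) := by
      conv_lhs => rw [hρsum, hBsum]
      exact qf_sum u p _ _ _
    rw [← hq2, hq3]
    refine Finset.sum_le_sum fun k _ => ?_
    exact mul_le_mul_of_nonneg_left
      (qf_kron_le hu0 (hτ k) (hτ1 k) (hω k) hσ _) (hp0 k)
  have hmono : ∫ u in Set.Ioi (0:ℝ), FL u ≤ ∫ u in Set.Ioi (0:ℝ), ∑ k, p k * FR k u :=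
    MeasureTheory.setIntegral_mono_on hFLint
      (MeasureTheory.integrable_finset_sum _ fun k _ => (hFRint k).const_mul (p k))
      measurableSet_Ioi hpoint
  have hval2 : ∫ u in Set.Ioi (0:ℝ), ∑ k, p k * FR k u
      = Real.log 2 * ∑ k, p k * relEnt (ω k) σ := by
    rw [MeasureTheory.integral_finset_sum _ fun k _ => (hFRint k).const_mul (p k)]
    rw [Finset.sum_congr rfl fun k (_ : k ∈ Finset.univ) =>
      MeasureTheory.integral_const_mul (p k) _]
    rw [Finset.sum_congr rfl fun k (_ : k ∈ Finset.univ) => by rw [hFRval k]]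
    rw [Finset.mul_sum]
    exact Finset.sum_congr rfl fun k _ => by ring
  rw [hFLval, hval2] at hmono
  exact le_of_mul_le_mul_left hmono hlog2

end RelEntProof

/-- For a separable state `ρ_AB = ∑ₖ pₖ τₖ ⊗ ωₖ` and a full-support state `σ` on `B`,
`D(ρ_AB ‖ ρ_A ⊗ σ) ≤ ∑ₖ pₖ D(ωₖ ‖ σ)` where `ρ_A = ∑ₖ pₖ τₖ`. -/
theorem relEnt_separable_le {dA dB ι : Type*}
    [Fintype dA] [DecidableEq dA] [Fintype dB] [DecidableEq dB] [Fintype ι]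
    (p : ι → ℝ) (τ : ι → Matrix dA dA ℂ) (ω : ι → Matrix dB dB ℂ)
    (σ : Matrix dB dB ℂ)
    (hp0 : ∀ k, 0 ≤ p k) (hp1 : ∑ k, p k = 1)
    (hτ : ∀ k, (τ k).PosSemidef) (hτ1 : ∀ k, (τ k).trace = 1)
    (hω : ∀ k, (ω k).PosSemidef) (hω1 : ∀ k, (ω k).trace = 1)
    (hσ : σ.PosDef) (hσ1 : σ.trace = 1) :
    relEnt (∑ k, p k • (τ k ⊗ₖ ω k)) ((∑ k, p k • τ k) ⊗ₖ σ)
      ≤ ∑ k, p k * relEnt (ω k) σ := by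
  classical
  have hσps : σ.PosSemidef := hσ.posSemidef
  have hρPSD : (∑ k, p k • (τ k ⊗ₖ ω k)).PosSemidef :=
    RelEntProof.posSemidef_sum fun k =>
      RelEntProof.posSemidef_smul (RelEntProof.posSemidef_kronecker (hτ k) (hω k)) (hp0 k)
  have hBsum : ((∑ k, p k • τ k) ⊗ₖ σ) = ∑ k, p k • (τ k ⊗ₖ σ) :=
    RelEntProof.sum_smul_kronecker p τ σ
  have hBPSD : ((∑ k, p k • τ k) ⊗ₖ σ).PosSemidef := by
    rw [hBsum]
    exact RelEntProof.posSemidef_sum fun k =>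
      RelEntProof.posSemidef_smul (RelEntProof.posSemidef_kronecker (hτ k) hσps) (hp0 k)
  have hρ1 : (∑ k, p k • (τ k ⊗ₖ ω k)).trace = 1 := by
    rw [Matrix.trace_sum]
    have e : ∀ k ∈ Finset.univ, (p k • (τ k ⊗ₖ ω k)).trace = ((p k : ℝ) : ℂ) := by
      intro k _
      rw [Matrix.trace_smul, Matrix.trace_kronecker, hτ1 k, hω1 k, one_mul,
        Complex.real_smul, mul_one]
    rw [Finset.sum_congr rfl e, ← Complex.ofReal_sum, hp1, Complex.ofReal_one]
  obtain ⟨hUu, hUu'⟩ := RelEntProof.unitary_facts hρPSD.1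
  obtain ⟨hVu, hVu'⟩ := RelEntProof.unitary_facts hBPSD.1
  rw [RelEntProof.relEnt_scalar hρPSD hBPSD]
  exact RelEntProof.core_ineq p τ ω σ hp0 hp1 hτ hτ1 hω hω1 hσ _ _ _ _ _ _
    hUu hUu' hVu hVu'
    (RelEntProof.spectral_eq hρPSD.1) (RelEntProof.spectral_eq hBPSD.1)
    rfl hBsum
    hρPSD.eigenvalues_nonneg hBPSD.eigenvalues_nonneg
    (RelEntProof.sum_eigenvalues_eq_one hρPSD.1 hρ1)
    (RelEntProof.overlap_row_sum hρPSD.1 hBPSD.1)
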